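/- Let X be a compact metric space and f : X → X a homeomorphism. Suppose (A_n) is a sequence of nonempty compact sets with f(A_n) ⊆ A_n and A_{n+1} ⊆ A_n, where each A_n is a disjoint union of m_n compact sets cyclically permuted by f (f(D_{n,i}) ⊆ D_{n,i+1 mod m_n}) and max_i diam(D_{n,i}) → 0 as n → ∞. Then f restricted to C = ⋂_n A_n is uniquely ergodic: there is exactly one f-invariant Borel probability measure supported on C, and it assigns mass 1/m_n to each set D_{n,i} ∩ C. -/

import Mathlib

open Filter MeasureTheory Topology

set_option linter.unusedSectionVars false
set_option maxHeartbeats 1000000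

namespace AddingMachineAux

variable {X : Type*} [MetricSpace X] [CompactSpace X]
    [MeasurableSpace X] [BorelSpace X]

/-- level-n approximation -/
def A (m : ℕ → ℕ) (D : ℕ → ℕ → Set X) (n : ℕ) : Set X := ⋃ i ∈ Set.Iio (m n), D n i

/-- the Cantor-like invariant set -/
def C (m : ℕ → ℕ) (D : ℕ → ℕ → Set X) : Set X := ⋂ n, A m D n

variable {f : X ≃ₜ X} {m : ℕ → ℕ} {D : ℕ → ℕ → Set X}

theorem isClosed_A (hDcompact : ∀ n i, i < m n → IsCompact (D n i)) (n : ℕ) :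
    IsClosed (A m D n) := by
  have : A m D n = ⋃ i ∈ (Set.Iio (m n)), D n i := rfl
  rw [this]
  exact (Set.finite_Iio _).isClosed_biUnion fun i hi =>
    (hDcompact n i hi).isClosed

theorem isClosed_C (hDcompact : ∀ n i, i < m n → IsCompact (D n i)) : IsClosed (C m D) :=
  isClosed_iInter fun n => isClosed_A hDcompact n

theorem C_subset_A (n : ℕ) : C m D ⊆ A m D n := Set.iInter_subset _ n

theorem A_antitone (hnested : ∀ n, (⋃ i ∈ Set.Iio (m (n + 1)), D (n + 1) i) ⊆
      ⋃ i ∈ Set.Iio (m n), D n i) {k n : ℕ} (hkn : k ≤ n) : A m D n ⊆ A m D k := by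
  induction n with
  | zero => simp [Nat.le_zero.mp hkn, subset_rfl]
  | succ n ih =>
    rcases Nat.lt_or_ge k (n+1) with h | h
    · exact (hnested n).trans (ih (Nat.lt_succ_iff.mp h))
    · have : k = n + 1 := le_antisymm hkn h
      subst this; exact subset_rfl

theorem mapsTo_A (hm : ∀ n, 0 < m n)
    (hDmap : ∀ n i, i < m n → f '' (D n i) ⊆ D n ((i + 1) % m n)) (n : ℕ) :
    ∀ x ∈ A m D n, f x ∈ A m D n := by
  intro x hx
  simp only [A, Set.mem_iUnion, Set.mem_Iio] at hx ⊢
  obtain ⟨i, hi, hxi⟩ := hx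
  exact ⟨(i+1) % m n, Nat.mod_lt _ (hm n), hDmap n i hi ⟨x, hxi, rfl⟩⟩

theorem mapsTo_C (hm : ∀ n, 0 < m n)
    (hDmap : ∀ n i, i < m n → f '' (D n i) ⊆ D n ((i + 1) % m n)) :
    ∀ x ∈ C m D, f x ∈ C m D := by
  intro x hx
  simp only [C, Set.mem_iInter] at hx ⊢
  exact fun n => mapsTo_A hm hDmap n x (hx n)


/-- Any invariant probability measure giving full mass to `C` gives each piece `D n i`
mass `1/(m n)`. -/
theorem mass (hm : ∀ n, 0 < m n)
    (hDcompact : ∀ n i, i < m n → IsCompact (D n i))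
    (hDdisj : ∀ n i j, i < m n → j < m n → i ≠ j → Disjoint (D n i) (D n j))
    (hDmap : ∀ n i, i < m n → f '' (D n i) ⊆ D n ((i + 1) % m n))
    (ν : Measure X) [IsProbabilityMeasure ν] (hinv : ν.map f = ν)
    (hC : ν (C m D) = 1) :
    ∀ n i, i < m n → ν (D n i) = ((m n : ENNReal))⁻¹ := by
  intro n
  have hpre : ∀ s : Set X, MeasurableSet s → ν (⇑f ⁻¹' s) = ν s := by
    intro s hs
    conv_rhs => rw [← hinv]
    rw [Measure.map_apply f.continuous.measurable hs]
  have hmeas : ∀ i, i < m n → MeasurableSet (D n i) := fun i hi =>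
    (hDcompact n i hi).isClosed.measurableSet
  have mono : ∀ i, i < m n → ν (D n i) ≤ ν (D n ((i + 1) % m n)) := by
    intro i hi
    have hsub : D n i ⊆ ⇑f ⁻¹' (D n ((i + 1) % m n)) := fun x hx =>
      hDmap n i hi ⟨x, hx, rfl⟩
    calc ν (D n i) ≤ ν (⇑f ⁻¹' (D n ((i + 1) % m n))) := measure_mono hsub
    _ = ν (D n ((i + 1) % m n)) := hpre _ (hmeas _ (Nat.mod_lt _ (hm n)))
  have incr : ∀ j, j < m n → ∀ i, i ≤ j → ν (D n i) ≤ ν (D n j) := by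
    intro j
    induction j with
    | zero => intro _ i hi; simp [Nat.le_zero.mp hi]
    | succ j ih =>
      intro hj i hi
      rcases Nat.lt_or_ge i (j+1) with h | h
      · have h1 : ν (D n i) ≤ ν (D n j) := ih (Nat.lt_of_succ_lt hj) i (Nat.lt_succ_iff.mp h)
        have h2 := mono j (Nat.lt_of_succ_lt hj)
        rw [Nat.mod_eq_of_lt hj] at h2
        exact h1.trans h2
      · have : i = j + 1 := le_antisymm hi h
        subst this; exact le_rfl
  have top_le_bot : ν (D n (m n - 1)) ≤ ν (D n 0) := by
    have h := mono (m n - 1) (Nat.sub_lt (hm n) one_pos)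
    have he : (m n - 1 + 1) % m n = 0 := by
      rw [Nat.sub_add_cancel (hm n), Nat.mod_self]
    rwa [he] at h
  have alleq : ∀ i, i < m n → ν (D n i) = ν (D n 0) := by
    intro i hi
    refine le_antisymm ?_ (incr i hi 0 (Nat.zero_le _))
    exact (incr (m n - 1) (Nat.sub_lt (hm n) one_pos) i (Nat.le_sub_one_of_lt hi)).trans top_le_bot
  have hAval : ν (A m D n) = 1 := by
    refine le_antisymm prob_le_one ?_
    rw [← hC]; exact measure_mono (C_subset_A n)
  have hsum : ∑ i ∈ Finset.range (m n), ν (D n i) = 1 := by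
    rw [← hAval]
    have : A m D n = ⋃ i ∈ (Finset.range (m n) : Finset ℕ), D n i := by
      simp [A, Finset.coe_range]
    rw [this, measure_biUnion_finset ?_ (fun i hi => hmeas i (Finset.mem_range.mp hi))]
    intro i hi j hj hij
    exact hDdisj n i j (by simpa using hi) (by simpa using hj) hij
  have hconst : (m n : ENNReal) * ν (D n 0) = 1 := by
    rw [← hsum, Finset.sum_congr rfl (fun i hi => alleq i (Finset.mem_range.mp hi)),
      Finset.sum_const, Finset.card_range, nsmul_eq_mul]
  have hval : ν (D n 0) = ((m n : ENNReal))⁻¹ := by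
    have hne : (m n : ENNReal) ≠ 0 := by
      exact_mod_cast Nat.cast_ne_zero.mpr (Nat.pos_iff_ne_zero.mp (hm n))
    have hnt : (m n : ENNReal) ≠ ⊤ := ENNReal.natCast_ne_top _
    have := congrArg (fun x => ((m n : ENNReal))⁻¹ * x) hconst
    simpa [← mul_assoc, ENNReal.inv_mul_cancel hne hnt] using this
  intro i hi; rw [alleq i hi, hval]

theorem mass_inter (hm : ∀ n, 0 < m n)
    (hDcompact : ∀ n i, i < m n → IsCompact (D n i))
    (hDdisj : ∀ n i j, i < m n → j < m n → i ≠ j → Disjoint (D n i) (D n j))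
    (hDmap : ∀ n i, i < m n → f '' (D n i) ⊆ D n ((i + 1) % m n))
    (ν : Measure X) [IsProbabilityMeasure ν] (hinv : ν.map f = ν)
    (hC : ν (C m D) = 1) :
    ∀ n i, i < m n → ν (D n i ∩ C m D) = ((m n : ENNReal))⁻¹ := by
  have hCc : ν (C m D)ᶜ = 0 := by
    rw [measure_compl (isClosed_C hDcompact).measurableSet (measure_ne_top ν _), hC]
    simp
  intro n i hi
  rw [← mass hm hDcompact hDdisj hDmap ν hinv hC n i hi]
  refine le_antisymm (measure_mono Set.inter_subset_left) ?_
  calc ν (D n i) ≤ ν (D n i ∩ C m D) + ν (D n i \ C m D) := measure_le_inter_add_diff ν _ _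
  _ ≤ ν (D n i ∩ C m D) + ν (C m D)ᶜ := by
      gcongr; exact Set.diff_subset_compl _ _
  _ = ν (D n i ∩ C m D) := by rw [hCc, add_zero]


/-- key half of uniqueness: `ν₁ K ≤ ν₂ K` for closed `K`. -/
theorem le_on_closed (hm : ∀ n, 0 < m n)
    (hDcompact : ∀ n i, i < m n → IsCompact (D n i))
    (hDdisj : ∀ n i j, i < m n → j < m n → i ≠ j → Disjoint (D n i) (D n j))
    (hDmap : ∀ n i, i < m n → f '' (D n i) ⊆ D n ((i + 1) % m n))
    (hdiam : ∀ ε : ℝ, 0 < ε → ∃ N : ℕ, ∀ n ≥ N, ∀ i < m n, Metric.diam (D n i) < ε)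
    (ν₁ ν₂ : Measure X) [IsProbabilityMeasure ν₁] [IsProbabilityMeasure ν₂]
    (hinv₁ : ν₁.map f = ν₁) (hC₁ : ν₁ (C m D) = 1)
    (hinv₂ : ν₂.map f = ν₂) (hC₂ : ν₂ (C m D) = 1)
    (K : Set X) (hK : IsClosed K) : ν₁ K ≤ ν₂ K := by
  classical
  have hmass₁ := mass hm hDcompact hDdisj hDmap ν₁ hinv₁ hC₁
  have hmass₂ := mass hm hDcompact hDdisj hDmap ν₂ hinv₂ hC₂
  have key : ∀ ε : ℝ, 0 < ε → ν₁ K ≤ ν₂ (Metric.cthickening ε K) := by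
    intro ε hε
    obtain ⟨N, hN⟩ := hdiam ε hε
    set S : Finset ℕ := (Finset.range (m N)).filter (fun i => (D N i ∩ C m D ∩ K).Nonempty)
      with hS
    have hmeas : ∀ i, i < m N → MeasurableSet (D N i) := fun i hi =>
      (hDcompact N i hi).isClosed.measurableSet
    -- ν₁ K ≤ ν₁ (K ∩ C) + 0
    have hCc₁ : ν₁ (C m D)ᶜ = 0 := by
      rw [measure_compl (isClosed_C hDcompact).measurableSet (measure_ne_top ν₁ _), hC₁]; simp
    have h1 : ν₁ K ≤ ν₁ (⋃ i ∈ S, D N i) + ν₁ (C m D)ᶜ := by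
      refine le_trans (measure_mono ?_) (measure_union_le _ _)
      intro x hx
      by_cases hxC : x ∈ C m D
      · left
        have hxA : x ∈ A m D N := Set.mem_iInter.mp hxC N
        simp only [A, Set.mem_iUnion, Set.mem_Iio] at hxA
        obtain ⟨i, hi, hxi⟩ := hxA
        exact Set.mem_biUnion
          (Finset.mem_filter.mpr ⟨Finset.mem_range.mpr hi, ⟨x, ⟨hxi, hxC⟩, hx⟩⟩) hxi
      · right; exact hxC
    have h2 : ν₁ (⋃ i ∈ S, D N i) ≤ (S.card : ENNReal) * ((m N : ENNReal))⁻¹ := by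
      calc ν₁ (⋃ i ∈ S, D N i) ≤ ∑ i ∈ S, ν₁ (D N i) := measure_biUnion_finset_le _ _
      _ = ∑ _i ∈ S, ((m N : ENNReal))⁻¹ := by
          refine Finset.sum_congr rfl fun i hi => ?_
          exact hmass₁ N i (Finset.mem_range.mp (Finset.mem_filter.mp hi).1)
      _ = (S.card : ENNReal) * ((m N : ENNReal))⁻¹ := by
          rw [Finset.sum_const, nsmul_eq_mul]
    have h3 : (S.card : ENNReal) * ((m N : ENNReal))⁻¹ ≤ ν₂ (Metric.cthickening ε K) := by
      have hsub : ∀ i ∈ S, D N i ⊆ Metric.cthickening ε K := by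
        intro i hi
        have hmem := Finset.mem_filter.mp hi
        have hi' : i < m N := Finset.mem_range.mp hmem.1
        obtain ⟨z, ⟨hzD, _⟩, hzK⟩ := hmem.2
        intro y hy
        refine Metric.mem_cthickening_of_dist_le y z ε K hzK ?_
        calc dist y z ≤ Metric.diam (D N i) :=
            Metric.dist_le_diam_of_mem (hDcompact N i hi').isBounded hy hzD
        _ ≤ ε := (hN N le_rfl i hi').le
      calc (S.card : ENNReal) * ((m N : ENNReal))⁻¹
          = ∑ i ∈ S, ν₂ (D N i) := by
            rw [Finset.sum_congr rfl (fun i hi =>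
              hmass₂ N i (Finset.mem_range.mp (Finset.mem_filter.mp hi).1)),
              Finset.sum_const, nsmul_eq_mul]
      _ = ν₂ (⋃ i ∈ S, D N i) := by
          rw [measure_biUnion_finset ?_ (fun i hi =>
            hmeas i (Finset.mem_range.mp (Finset.mem_filter.mp hi).1))]
          intro i hi j hj hij
          exact hDdisj N i j (Finset.mem_range.mp (Finset.mem_filter.mp hi).1)
            (Finset.mem_range.mp (Finset.mem_filter.mp hj).1) hij
      _ ≤ ν₂ (Metric.cthickening ε K) := measure_mono (Set.iUnion₂_subset hsub)
    calc ν₁ K ≤ ν₁ (⋃ i ∈ S, D N i) + ν₁ (C m D)ᶜ := h1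
    _ = ν₁ (⋃ i ∈ S, D N i) := by rw [hCc₁, add_zero]
    _ ≤ (S.card : ENNReal) * ((m N : ENNReal))⁻¹ := h2
    _ ≤ ν₂ (Metric.cthickening ε K) := h3
  -- now pass to the limit ε → 0
  have htend : Tendsto (fun ε : ℝ => ν₂ (Metric.cthickening ε K)) (𝓝[>] 0) (𝓝 (ν₂ K)) := by
    refine Tendsto.mono_left (tendsto_measure_cthickening_of_isClosed ?_ hK) nhdsWithin_le_nhds
    exact ⟨1, one_pos, measure_ne_top _ _⟩
  refine ge_of_tendsto htend ?_
  filter_upwards [self_mem_nhdsWithin] with ε hε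
  exact key ε hε


section S1
variable (hm : ∀ n, 0 < m n)
    (hDcompact : ∀ n i, i < m n → IsCompact (D n i))
    (hDnonempty : ∀ n i, i < m n → (D n i).Nonempty)
    (hDdisj : ∀ n i j, i < m n → j < m n → i ≠ j → Disjoint (D n i) (D n j))
    (hDmap : ∀ n i, i < m n → f '' (D n i) ⊆ D n ((i + 1) % m n))
    (hnested : ∀ n, (⋃ i ∈ Set.Iio (m (n + 1)), D (n + 1) i) ⊆
        ⋃ i ∈ Set.Iio (m n), D n i)
    (hdiam : ∀ ε : ℝ, 0 < ε → ∃ N : ℕ, ∀ n ≥ N, ∀ i < m n, Metric.diam (D n i) < ε)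

include hm hDmap in
theorem iterate_mem (n : ℕ) : ∀ (t : ℕ) (x : X) (j : ℕ), j < m n → x ∈ D n j →
    f^[t] x ∈ D n ((j + t) % m n) := by
  intro t
  induction t with
  | zero => intro x j hj hx; simpa [Nat.mod_eq_of_lt hj] using hx
  | succ t ih =>
    intro x j hj hx
    rw [Function.iterate_succ_apply']
    have h1 := ih x j hj hx
    have h2 := hDmap n _ (Nat.mod_lt _ (hm n)) ⟨_, h1, rfl⟩
    have : ((j + t) % m n + 1) % m n = (j + (t+1)) % m n := by
      rw [Nat.mod_add_mod, ← Nat.add_assoc]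
    rwa [this] at h2

include hm hDmap in
theorem iterate_mem_A (n : ℕ) : ∀ (t : ℕ) (x : X), x ∈ A m D n → f^[t] x ∈ A m D n := by
  intro t
  induction t with
  | zero => intro x hx; simpa using hx
  | succ t ih =>
    intro x hx
    rw [Function.iterate_succ_apply']
    exact mapsTo_A hm hDmap n _ (ih x hx)

theorem iInter_A_eq (hnested : ∀ n, (⋃ i ∈ Set.Iio (m (n + 1)), D (n + 1) i) ⊆
      ⋃ i ∈ Set.Iio (m n), D n i) (n : ℕ) : ⋂ K, A m D (n + K) = C m D := by
  apply Set.Subset.antisymm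
  · intro x hx
    simp only [C, Set.mem_iInter] at hx ⊢
    intro n'
    exact A_antitone hnested (Nat.le_add_left n' n) (hx n')
  · intro x hx
    simp only [Set.mem_iInter]
    have hx' : ∀ k, x ∈ A m D k := Set.mem_iInter.mp hx
    exact fun K => hx' (n + K)

include hm hDcompact hDnonempty hDmap hnested in
theorem piece_inter_C_nonempty : ∀ n i, i < m n → (D n i ∩ C m D).Nonempty := by
  intro n i hi
  have hne : ∀ K : ℕ, (D n i ∩ A m D (n + K)).Nonempty := by
    intro K
    obtain ⟨x₀, hx₀⟩ := hDnonempty (n + K) 0 (hm (n + K))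
    have hx₀A : x₀ ∈ A m D (n + K) := by
      exact Set.mem_biUnion (Set.mem_Iio.mpr (hm (n+K))) hx₀
    have hx₀An : x₀ ∈ A m D n := A_antitone hnested (Nat.le_add_right n K) hx₀A
    simp only [A, Set.mem_iUnion, Set.mem_Iio] at hx₀An
    obtain ⟨j, hj, hx₀j⟩ := hx₀An
    refine ⟨f^[i + m n - j] x₀, ?_, ?_⟩
    · have := iterate_mem hm hDmap n (i + m n - j) x₀ j hj hx₀j
      have heq : (j + (i + m n - j)) % m n = i := by
        have h1 : j + (i + m n - j) = i + m n := by omega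
        rw [h1, Nat.add_mod_right, Nat.mod_eq_of_lt hi]
      rwa [heq] at this
    · exact iterate_mem_A hm hDmap (n + K) (i + m n - j) x₀ hx₀A
  have key := IsCompact.nonempty_iInter_of_sequence_nonempty_isCompact_isClosed
    (fun K => D n i ∩ A m D (n + K))
    (fun K => Set.inter_subset_inter_right _
      (A_antitone hnested (Nat.le_succ _)))
    hne
    ((hDcompact n i hi).inter_right (isClosed_A hDcompact _))
    (fun K => (hDcompact n i hi).isClosed.inter (isClosed_A hDcompact _))
  rwa [← Set.inter_iInter, iInter_A_eq hnested n] at key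

include hDcompact hDdisj in
theorem separation (n : ℕ) : ∃ δ : ℝ, 0 < δ ∧ ∀ i j, i < m n → j < m n → i ≠ j →
    Disjoint (Metric.thickening δ (D n i)) (Metric.thickening δ (D n j)) := by
  classical
  have hpair : ∀ p : ℕ × ℕ, ∃ δ : ℝ, 0 < δ ∧ (p.1 < m n → p.2 < m n → p.1 ≠ p.2 →
      Disjoint (Metric.thickening δ (D n p.1)) (Metric.thickening δ (D n p.2))) := by
    intro p
    by_cases h : p.1 < m n ∧ p.2 < m n ∧ p.1 ≠ p.2
    · obtain ⟨h1, h2, h3⟩ := h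
      obtain ⟨δ, hδ, hdisj⟩ := (hDdisj n p.1 p.2 h1 h2 h3).exists_thickenings
        (hDcompact n p.1 h1) (hDcompact n p.2 h2).isClosed
      exact ⟨δ, hδ, fun _ _ _ => hdisj⟩
    · exact ⟨1, one_pos, fun h1 h2 h3 => absurd ⟨h1, h2, h3⟩ h⟩
  choose g hg0 hgdisj using hpair
  set T : Finset (ℕ × ℕ) :=
    ((Finset.range (m n)) ×ˢ (Finset.range (m n))).filter (fun p => p.1 ≠ p.2) with hT
  by_cases hTne : T.Nonempty
  · refine ⟨T.inf' hTne g, ?_, ?_⟩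
    · exact (Finset.lt_inf'_iff hTne).mpr fun p _ => hg0 p
    · intro i j hi hj hij
      have hmem : (i, j) ∈ T := by
        simp only [hT, Finset.mem_filter, Finset.mem_product, Finset.mem_range]
        exact ⟨⟨hi, hj⟩, hij⟩
      have hle := Finset.inf'_le g hmem
      exact (hgdisj (i, j) hi hj hij).mono
        (Metric.thickening_mono hle _) (Metric.thickening_mono hle _)
  · refine ⟨1, one_pos, fun i j hi hj hij => ?_⟩
    exact absurd ⟨(i,j), by
      simp only [hT, Finset.mem_filter, Finset.mem_product, Finset.mem_range]
      exact ⟨⟨hi, hj⟩, hij⟩⟩ hTne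

include hm hDcompact hDnonempty hDdisj hDmap hnested hdiam in
theorem step : ∀ n : ℕ, ∃ n', n < n' ∧ m n ∣ m n' ∧
    ∃ c, ∀ j, j < m n' → D n' j ⊆ D n ((j + c) % m n) := by
  classical
  intro n
  obtain ⟨δ, hδ, hsep⟩ := separation hDcompact hDdisj n
  obtain ⟨N, hN⟩ := hdiam δ hδ
  refine ⟨max N n + 1, by omega, ?_⟩
  set n' := max N n + 1 with hn'
  have hn'N : N ≤ n' := by omega
  have hnn' : n ≤ n' := by omega
  have hsub : ∀ j, j < m n' → ∃ i, i < m n ∧ D n' j ⊆ D n i := by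
    intro j hj
    obtain ⟨x₀, hx₀⟩ := hDnonempty n' j hj
    have hx₀A : x₀ ∈ A m D n :=
      A_antitone hnested hnn' (Set.mem_biUnion (Set.mem_Iio.mpr hj) hx₀)
    simp only [A, Set.mem_iUnion, Set.mem_Iio] at hx₀A
    obtain ⟨i, hi, hx₀i⟩ := hx₀A
    refine ⟨i, hi, fun y hy => ?_⟩
    have hyA : y ∈ A m D n :=
      A_antitone hnested hnn' (Set.mem_biUnion (Set.mem_Iio.mpr hj) hy)
    simp only [A, Set.mem_iUnion, Set.mem_Iio] at hyA
    obtain ⟨i', hi', hyi'⟩ := hyA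
    rcases eq_or_ne i' i with h | h
    · rwa [h] at hyi'
    · exfalso
      have hythick : y ∈ Metric.thickening δ (D n i) := by
        rw [Metric.mem_thickening_iff]
        refine ⟨x₀, hx₀i, ?_⟩
        calc dist y x₀ ≤ Metric.diam (D n' j) :=
          Metric.dist_le_diam_of_mem (hDcompact n' j hj).isBounded hy hx₀
        _ < δ := hN n' hn'N j hj
      have hythick' : y ∈ Metric.thickening δ (D n i') :=
        Metric.self_subset_thickening hδ _ hyi'
      exact Set.disjoint_left.mp (hsep i' i hi' hi h) hythick' hythick
  choose! φ hφlt hφsub using hsub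
  have hstep : ∀ j, j < m n' → φ ((j+1) % m n') = (φ j + 1) % m n := by
    intro j hj
    obtain ⟨x₀, hx₀⟩ := hDnonempty n' j hj
    have h1 : f x₀ ∈ D n (φ ((j+1) % m n')) :=
      hφsub _ (Nat.mod_lt _ (hm n')) (hDmap n' j hj ⟨x₀, hx₀, rfl⟩)
    have h2 : f x₀ ∈ D n ((φ j + 1) % m n) :=
      hDmap n (φ j) (hφlt j hj) ⟨x₀, hφsub j hj hx₀, rfl⟩
    by_contra hne
    exact Set.disjoint_left.mp
      (hDdisj n _ _ (hφlt _ (Nat.mod_lt _ (hm n'))) (Nat.mod_lt _ (hm n)) hne) h1 h2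
  have hiter : ∀ t : ℕ, φ (t % m n') = (φ 0 + t) % m n := by
    intro t
    induction t with
    | zero => simp [Nat.mod_eq_of_lt (hφlt 0 (hm n'))]
    | succ t ih =>
      have h1 : (t + 1) % m n' = (t % m n' + 1) % m n' := by
        rw [Nat.mod_add_mod]
      rw [h1, hstep _ (Nat.mod_lt _ (hm n')), ih, Nat.mod_add_mod, ← Nat.add_assoc]
  have hdvd : m n ∣ m n' := by
    have h1 := hiter (m n')
    rw [Nat.mod_self] at h1
    have h2 : φ 0 % m n = (φ 0 + m n') % m n := by
      rw [Nat.mod_eq_of_lt (hφlt 0 (hm n'))]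
      exact h1
    have h3 : (0 : ℕ) ≡ m n' [MOD m n] := by
      have := Nat.ModEq.add_left_cancel' (φ 0) (show φ 0 + 0 ≡ φ 0 + m n' [MOD m n] by
        simpa [Nat.ModEq] using h2)
      exact this
    exact (Nat.modEq_zero_iff_dvd.mp h3.symm)
  refine ⟨hdvd, φ 0, fun j hj => ?_⟩
  have : φ j = (j + φ 0) % m n := by
    have := hiter j
    rwa [Nat.mod_eq_of_lt hj, Nat.add_comm (φ 0) j] at this
  rw [← this]
  exact hφsub j hj

end S1

theorem exists_invariant (hm : ∀ n, 0 < m n)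
    (hDcompact : ∀ n i, i < m n → IsCompact (D n i))
    (hDnonempty : ∀ n i, i < m n → (D n i).Nonempty)
    (hDdisj : ∀ n i j, i < m n → j < m n → i ≠ j → Disjoint (D n i) (D n j))
    (hDmap : ∀ n i, i < m n → f '' (D n i) ⊆ D n ((i + 1) % m n))
    (hnested : ∀ n, (⋃ i ∈ Set.Iio (m (n + 1)), D (n + 1) i) ⊆
        ⋃ i ∈ Set.Iio (m n), D n i)
    (hdiam : ∀ ε : ℝ, 0 < ε → ∃ N : ℕ, ∀ n ≥ N, ∀ i < m n, Metric.diam (D n i) < ε) :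
    ∃ μ : Measure X, IsProbabilityMeasure μ ∧ μ.map f = μ ∧ μ (C m D) = 1 := by
  classical
  obtain ⟨F, hFlt, hFdvd, c, hFc⟩ :
      ∃ F : ℕ → ℕ, (∀ n, n < F n) ∧ (∀ n, m n ∣ m (F n)) ∧
      ∃ c : ℕ → ℕ, ∀ n, ∀ j, j < m (F n) → D (F n) j ⊆ D n ((j + c n) % m n) := by
    choose F h1 h2 c h3 using step hm hDcompact hDnonempty hDdisj hDmap hnested hdiam
    exact ⟨F, h1, h2, c, h3⟩
  -- the tower of levels
  set k : ℕ → ℕ := fun t => Nat.rec 0 (fun _ prev => F prev) t with hk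
  have hks : ∀ t, k (t + 1) = F (k t) := fun t => rfl
  have hkmono : ∀ t, t ≤ k t := by
    intro t
    induction t with
    | zero => exact Nat.zero_le _
    | succ t ih => exact Nat.lt_of_le_of_lt ih (hFlt (k t))
  set M : ℕ → ℕ := fun t => m (k t) with hM
  have hMpos : ∀ t, 0 < M t := fun t => hm (k t)
  have hMdvd : ∀ t, M t ∣ M (t + 1) := fun t => hFdvd (k t)
  have hCsub : ∀ t j, j < M (t + 1) → D (k (t + 1)) j ⊆ D (k t) ((j + c (k t)) % M t) :=
    fun t => hFc (k t)
  -- offsets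
  set e : ℕ → ℕ := fun t => Nat.rec 0 (fun t prev => prev + (M t - c (k t) % M t)) t with he
  have hes : ∀ t, e (t + 1) = e t + (M t - c (k t) % M t) := fun t => rfl
  -- instances on the digit spaces
  haveI hNZ : ∀ t, NeZero (M t) := fun t => ⟨(hMpos t).ne'⟩
  letI instT : ∀ t, TopologicalSpace (ZMod (M t)) := fun t => ⊥
  haveI instD : ∀ t, DiscreteTopology (ZMod (M t)) := fun t => ⟨rfl⟩
  haveI instTG : ∀ t, IsTopologicalAddGroup (ZMod (M t)) := fun t =>
    { continuous_add := continuous_of_discreteTopology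
      continuous_neg := continuous_of_discreteTopology }
  -- the inverse-limit group
  let Gsub : AddSubgroup (∀ t, ZMod (M t)) :=
    { carrier := {h | ∀ t, ZMod.castHom (hMdvd t) (ZMod (M t)) (h (t + 1)) = h t}
      zero_mem' := by intro t; simp
      add_mem' := by intro a b ha hb t; simp [map_add, ha t, hb t]
      neg_mem' := by intro a ha t; simp [map_neg, ha t] }
  have hGclosed : IsClosed (Gsub : Set (∀ t, ZMod (M t))) := by
    have : (Gsub : Set (∀ t, ZMod (M t))) =
        ⋂ t, {h : ∀ t, ZMod (M t) | ZMod.castHom (hMdvd t) (ZMod (M t)) (h (t + 1)) = h t} := by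
      ext h; simp [Gsub, Set.mem_iInter]
    rw [this]
    refine isClosed_iInter fun t => ?_
    refine isClosed_eq ?_ (continuous_apply t)
    exact @Continuous.comp (∀ s, ZMod (M s)) (ZMod (M (t + 1))) (ZMod (M t)) _
      (instT (t + 1)) (instT t) (fun h => h (t + 1)) (⇑(ZMod.castHom (hMdvd t) (ZMod (M t))))
      (@continuous_of_discreteTopology _ (instT (t + 1)) (instD (t + 1)) _ (instT t) _)
      (continuous_apply (t + 1))
  haveI : CompactSpace ↥Gsub := isCompact_iff_compactSpace.mp hGclosed.isCompact
  letI instMG : MeasurableSpace ↥Gsub := borel ↥Gsub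
  haveI instBG : BorelSpace ↥Gsub := ⟨rfl⟩
  -- Haar measure
  let K₀ : TopologicalSpace.PositiveCompacts ↥Gsub :=
    ⟨⟨Set.univ, isCompact_univ⟩, by
      rw [interior_univ]; exact ⟨⟨0, Gsub.zero_mem⟩, trivial⟩⟩
  let μG : Measure ↥Gsub := Measure.addHaarMeasure K₀
  haveI : IsProbabilityMeasure μG := ⟨by
    exact Measure.addHaarMeasure_self (K₀ := K₀)⟩
  haveI : μG.IsAddLeftInvariant := Measure.isAddLeftInvariant_addHaarMeasure K₀
  -- the generator
  let one : ↥Gsub := ⟨fun t => 1, fun t => map_one _⟩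
  -- indices and pieces
  let idx : ∀ t, ZMod (M t) → ℕ := fun t g => (g.val + e t) % M t
  have hidxlt : ∀ t g, idx t g < M t := fun t g => Nat.mod_lt _ (hMpos t)
  let P : ∀ t, ZMod (M t) → Set X := fun t g => D (k t) (idx t g) ∩ C m D
  have hPne : ∀ t g, (P t g).Nonempty := fun t g =>
    piece_inter_C_nonempty hm hDcompact hDnonempty hDmap hnested (k t) (idx t g) (hidxlt t g)
  have hPcompact : ∀ t g, IsCompact (P t g) := fun t g =>
    (hDcompact (k t) (idx t g) (hidxlt t g)).inter_right (isClosed_C hDcompact)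
  have hPclosed : ∀ t g, IsClosed (P t g) := fun t g => (hPcompact t g).isClosed
  -- nesting along the inverse limit
  have hPnested : ∀ (h : ↥Gsub) (t : ℕ), P (t + 1) (h.1 (t + 1)) ⊆ P t (h.1 t) := by
    intro h t
    set a := h.1 (t + 1) with ha
    set b := h.1 t with hb
    have hab : ZMod.castHom (hMdvd t) (ZMod (M t)) a = b := h.2 t
    have hval : b.val = a.val % M t := by
      haveI := hNZ (t + 1)
      haveI := hNZ t
      have h1 : a = ((a.val : ℕ) : ZMod (M (t + 1))) := by
        rw [ZMod.natCast_val, ZMod.cast_id]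
      have h2 : b = ((a.val : ℕ) : ZMod (M t)) := by
        rw [← hab, ZMod.castHom_apply]
        conv_lhs => rw [h1]
        rw [ZMod.cast_natCast (hMdvd t)]
      rw [h2, ZMod.val_natCast]
    have harith : (idx (t + 1) a + c (k t)) % M t = idx t b := by
      show ((a.val + e (t + 1)) % M (t + 1) + c (k t)) % M t = (b.val + e t) % M t
      have h1 : ((a.val + e (t + 1)) % M (t + 1)) % M t = (a.val + e (t + 1)) % M t :=
        Nat.mod_mod_of_dvd _ (hMdvd t)
      have hL : ((a.val + e (t + 1)) % M (t + 1) + c (k t)) % M t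
          = (a.val + e (t + 1) + c (k t)) % M t := by
        conv_lhs => rw [← Nat.mod_add_mod]
        rw [h1, Nat.mod_add_mod]
      rw [hL, hes t, hval]
      have h2 : a.val + (e t + (M t - c (k t) % M t)) + c (k t)
          = a.val + e t + (M t + M t * (c (k t) / M t)) := by
        have h3 := Nat.mod_add_div (c (k t)) (M t)
        have h4 : c (k t) % M t < M t := Nat.mod_lt _ (hMpos t)
        generalize hq : M t * (c (k t) / M t) = q at h3
        generalize hr : c (k t) % M t = r at h3 h4 ⊢
        omega
      have h6 : a.val + e t + (M t + M t * (c (k t) / M t))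
          = a.val + e t + M t * (1 + c (k t) / M t) := by ring
      rw [h2, h6, Nat.add_mul_mod_self_left, Nat.mod_add_mod]
    intro x hx
    have hx' : x ∈ D (k t) ((idx (t + 1) a + c (k t)) % M t) ∩ C m D :=
      ⟨hCsub t (idx (t + 1) a) (hidxlt (t + 1) a) hx.1, hx.2⟩
    rwa [harith] at hx'
  -- small diameters along the tower
  have hPdiam : ∀ ε : ℝ, 0 < ε → ∃ t, ∀ g, Metric.diam (D (k t) (idx t g)) < ε := by
    intro ε hε
    obtain ⟨N, hN⟩ := hdiam ε hε
    exact ⟨N, fun g => hN (k N) (hkmono N) _ (hidxlt N g)⟩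
  -- the coding map
  have hSne : ∀ h : ↥Gsub, (⋂ t, P t (h.1 t)).Nonempty := by
    intro h
    exact IsCompact.nonempty_iInter_of_sequence_nonempty_isCompact_isClosed
      (fun t => P t (h.1 t)) (hPnested h) (fun t => hPne t (h.1 t))
      (hPcompact 0 (h.1 0)) (fun t => hPclosed t (h.1 t))
  let Φ : ↥Gsub → X := fun h => (hSne h).some
  have hΦmem : ∀ (h : ↥Gsub) (t : ℕ), Φ h ∈ P t (h.1 t) := by
    intro h t
    have := (hSne h).some_mem
    exact Set.mem_iInter.mp this t
  have hsingle : ∀ (h : ↥Gsub) (x y : X),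
      (∀ t, x ∈ P t (h.1 t)) → (∀ t, y ∈ P t (h.1 t)) → x = y := by
    intro h x y hx hy
    have hlt : ∀ ε : ℝ, 0 < ε → dist x y < ε := by
      intro ε hε
      obtain ⟨t, ht⟩ := hPdiam ε hε
      refine lt_of_le_of_lt ?_ (ht (h.1 t))
      exact Metric.dist_le_diam_of_mem (hDcompact _ _ (hidxlt t (h.1 t))).isBounded
        (hx t).1 (hy t).1
    have : dist x y ≤ 0 := by
      by_contra hcon
      push_neg at hcon
      exact absurd (hlt _ hcon) (lt_irrefl _)
    exact eq_of_dist_eq_zero (le_antisymm this dist_nonneg)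
  have hΦC : ∀ h, Φ h ∈ C m D := fun h => (hΦmem h 0).2
  -- equivariance
  have hΦequi : ∀ h : ↥Gsub, Φ (one + h) = f (Φ h) := by
    intro h
    refine hsingle (one + h) _ _ (fun t => hΦmem (one + h) t) ?_
    intro t
    have hco : (one + h).1 t = 1 + h.1 t := rfl
    have hmem := hΦmem h t
    have h1 : f (Φ h) ∈ D (k t) ((idx t (h.1 t) + 1) % M t) :=
      hDmap (k t) (idx t (h.1 t)) (hidxlt t (h.1 t)) ⟨Φ h, hmem.1, rfl⟩
    have h2 : f (Φ h) ∈ C m D := mapsTo_C hm hDmap _ hmem.2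
    have harith : (idx t (h.1 t) + 1) % M t = idx t (1 + h.1 t) := by
      set g := h.1 t with hg
      show ((g.val + e t) % M t + 1) % M t = ((1 + g).val + e t) % M t
      haveI := hNZ t
      have hval1 : (1 + g).val = (1 % M t + g.val) % M t := by
        rw [ZMod.val_add, ZMod.val_one_eq_one_mod]
      have hL : ((g.val + e t) % M t + 1) % M t = (g.val + e t + 1) % M t :=
        Nat.mod_add_mod _ _ _
      have hR : ((1 % M t + g.val) % M t + e t) % M t = (g.val + e t + 1) % M t := by
        rw [Nat.mod_add_mod]
        have h9 : 1 % M t + g.val + e t = 1 % M t + (g.val + e t) := by omega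
        rw [h9, Nat.mod_add_mod]
        have h10 : 1 + (g.val + e t) = g.val + e t + 1 := by omega
        rw [h10]
      rw [hval1, hL, hR]
    rw [hco]
    show f (Φ h) ∈ D (k t) (idx t (1 + h.1 t)) ∩ C m D
    rw [← harith]
    exact ⟨h1, h2⟩
  -- continuity of Φ
  have hΦcont : Continuous Φ := by
    rw [continuous_iff_continuousAt]
    intro h
    rw [ContinuousAt, Metric.tendsto_nhds]
    intro ε hε
    obtain ⟨t, ht⟩ := hPdiam ε hε
    have hopen : IsOpen {a : ↥Gsub | a.1 t = h.1 t} := by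
      have hrw : {a : ↥Gsub | a.1 t = h.1 t} =
          (fun a : ↥Gsub => a.1 t) ⁻¹' {h.1 t} := rfl
      rw [hrw]
      exact IsOpen.preimage ((continuous_apply t).comp continuous_subtype_val)
        (isOpen_discrete _)
    filter_upwards [hopen.mem_nhds (by exact rfl)] with a hat
    have hat' : a.1 t = h.1 t := hat
    have h1 := (hΦmem a t).1
    rw [hat'] at h1
    refine lt_of_le_of_lt ?_ (ht (h.1 t))
    exact Metric.dist_le_diam_of_mem (hDcompact _ _ (hidxlt _ _)).isBounded h1 (hΦmem h t).1
  have hΦmeas : Measurable Φ := hΦcont.measurable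
  refine ⟨Measure.map Φ μG, Measure.isProbabilityMeasure_map hΦmeas.aemeasurable, ?_, ?_⟩
  · -- invariance
    have htransmeas : Measurable (fun a : ↥Gsub => one + a) :=
      (continuous_const.add continuous_id).measurable
    rw [Measure.map_map f.continuous.measurable hΦmeas]
    have hcomp : ⇑f ∘ Φ = Φ ∘ (fun a => one + a) := by
      funext a; exact (hΦequi a).symm
    rw [hcomp, ← Measure.map_map hΦmeas htransmeas, map_add_left_eq_self μG one]
  · rw [Measure.map_apply hΦmeas (isClosed_C hDcompact).measurableSet]
    have hpre : Φ ⁻¹' (C m D) = Set.univ := Set.eq_univ_of_forall fun h => hΦC h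
    rw [hpre]
    exact measure_univ



theorem unique_aux (hm : ∀ n, 0 < m n)
    (hDcompact : ∀ n i, i < m n → IsCompact (D n i))
    (hDdisj : ∀ n i j, i < m n → j < m n → i ≠ j → Disjoint (D n i) (D n j))
    (hDmap : ∀ n i, i < m n → f '' (D n i) ⊆ D n ((i + 1) % m n))
    (hdiam : ∀ ε : ℝ, 0 < ε → ∃ N : ℕ, ∀ n ≥ N, ∀ i < m n, Metric.diam (D n i) < ε)
    (ν₁ ν₂ : Measure X) [IsProbabilityMeasure ν₁] [IsProbabilityMeasure ν₂]
    (hinv₁ : ν₁.map f = ν₁) (hC₁ : ν₁ (C m D) = 1)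
    (hinv₂ : ν₂.map f = ν₂) (hC₂ : ν₂ (C m D) = 1) : ν₁ = ν₂ := by
  have hle := le_on_closed hm hDcompact hDdisj hDmap hdiam ν₁ ν₂ hinv₁ hC₁ hinv₂ hC₂
  have hge := le_on_closed hm hDcompact hDdisj hDmap hdiam ν₂ ν₁ hinv₂ hC₂ hinv₁ hC₁
  refine ext_of_generate_finite {s : Set X | IsClosed s} ?_ isPiSystem_isClosed ?_ ?_
  · rw [BorelSpace.measurable_eq (α := X), borel_eq_generateFrom_isClosed]
  · intro s hs
    exact le_antisymm (hle s hs) (hge s hs)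
  · simp

end AddingMachineAux

open AddingMachineAux in
/-- Unique ergodicity of the generalized adding machine: given nested forward
invariant families `Aₙ = ⨆_{i<mₙ} D_{n,i}` of disjoint compact sets cyclically
permuted by `f`, with diameters of the pieces tending to `0`, there is exactly
one `f`-invariant Borel probability measure carried by `C = ⋂ₙ Aₙ`, and it gives
mass `1/mₙ` to each `D_{n,i} ∩ C`. -/
theorem adding_machine_uniquely_ergodic
    {X : Type*} [MetricSpace X] [CompactSpace X]
    [MeasurableSpace X] [BorelSpace X]
    (f : X ≃ₜ X) (m : ℕ → ℕ) (hm : ∀ n, 0 < m n)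
    (D : ℕ → ℕ → Set X)
    (hDcompact : ∀ n i, i < m n → IsCompact (D n i))
    (hDnonempty : ∀ n i, i < m n → (D n i).Nonempty)
    (hDdisj : ∀ n i j, i < m n → j < m n → i ≠ j → Disjoint (D n i) (D n j))
    (hDmap : ∀ n i, i < m n → f '' (D n i) ⊆ D n ((i + 1) % m n))
    (hnested : ∀ n, (⋃ i ∈ Set.Iio (m (n + 1)), D (n + 1) i) ⊆
        ⋃ i ∈ Set.Iio (m n), D n i)
    (hdiam : ∀ ε : ℝ, 0 < ε → ∃ N : ℕ, ∀ n ≥ N, ∀ i < m n,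
        Metric.diam (D n i) < ε) :
    ∃ μ : Measure X,
      (IsProbabilityMeasure μ ∧ μ.map f = μ ∧
        μ (⋂ n, ⋃ i ∈ Set.Iio (m n), D n i) = 1 ∧
        ∀ n, ∀ i < m n,
          μ (D n i ∩ ⋂ n', ⋃ j ∈ Set.Iio (m n'), D n' j) = ((m n : ENNReal))⁻¹) ∧
      ∀ ν : Measure X, IsProbabilityMeasure ν → ν.map f = ν →
        ν (⋂ n, ⋃ i ∈ Set.Iio (m n), D n i) = 1 → ν = μ := by
  have hCeq : (⋂ n, ⋃ i ∈ Set.Iio (m n), D n i) = C m D := rfl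
  obtain ⟨μ, hprob, hinv, hC⟩ :=
    exists_invariant hm hDcompact hDnonempty hDdisj hDmap hnested hdiam
  haveI := hprob
  refine ⟨μ, ⟨hprob, hinv, by rw [hCeq]; exact hC, ?_⟩, ?_⟩
  · intro n i hi
    have := mass_inter hm hDcompact hDdisj hDmap μ hinv hC n i hi
    rw [hCeq]
    exact this
  · intro ν hν hνinv hνC
    haveI := hν
    rw [hCeq] at hνC
    exact unique_aux hm hDcompact hDdisj hDmap hdiam ν μ hνinv hνC hinv hC
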